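/- arXiv:math/0603267 — 2 statements merged into one kernel-verified Lean document; each statement's English description precedes it below -/
import Mathlib

section
/- Let U and A be bialgebras over a field k and suppose τ : U ⊗ A → k satisfies (A.1)–(A.4) and is convolution invertible. Define σ : (U ⊗ A) ⊗ (U ⊗ A) → k by σ(u ⊗ a, u' ⊗ a') = ε(a) τ(u', a) ε(a'). Then σ is a two-cocycle for the tensor product bialgebra U ⊗ A. -/
/- STATEMENT 3: If `τ : U ⊗ A → k` satisfies (A.1)–(A.4) and is convolution invertible, then
`σ : (U ⊗ A) ⊗ (U ⊗ A) → k`, `σ(u ⊗ a, u' ⊗ a') = ε(u) τ(u', a) ε(a')`, is a two-cocycle for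
the tensor product bialgebra `U ⊗ A`: it is convolution invertible and satisfies
`σ(x₁,y₁)σ(x₂y₂,z) = σ(y₁,z₁)σ(x,y₂z₂)` for all `x, y, z ∈ U ⊗ A`. -/

open TensorProduct Coalgebra

universe u

/-- The representation of `comul a` as a finite sum of pure tensors, with the index type as an
implicit field (the older Mathlib `Coalgebra.Repr`). -/
structure CoalgebraReprOld (R : Type*) {A : Type*}
    [CommSemiring R] [AddCommMonoid A] [Module R A] [CoalgebraStruct R A] (a : A) where
  {ι : Type*}
  (index : Finset ι)
  (left : ι → A)
  (right : ι → A)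
  (eq : ∑ i ∈ index, left i ⊗ₜ[R] right i = CoalgebraStruct.comul a)

/-- convolution product of two functionals on a coalgebra `C`. -/
noncomputable def convolution {k C : Type u} [CommRing k] [AddCommGroup C] [Module k C]
    [Coalgebra k C] (f g : C →ₗ[k] k) : C →ₗ[k] k :=
  LinearMap.mul' k k ∘ₗ TensorProduct.map f g ∘ₗ Coalgebra.comul

/-- the linear form `σ((u ⊗ a) ⊗ (u' ⊗ a')) = ε(u) τ(u' ⊗ a) ε(a')` on `(U ⊗ A) ⊗ (U ⊗ A)`. -/
noncomputable def twistForm {k U A : Type u} [Field k] [Ring U] [Ring A]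
    [Bialgebra k U] [Bialgebra k A] (τ : U ⊗[k] A →ₗ[k] k) :
    (U ⊗[k] A) ⊗[k] (U ⊗[k] A) →ₗ[k] k :=
  τ ∘ₗ TensorProduct.map
      ((TensorProduct.lid k U).toLinearMap ∘ₗ
        TensorProduct.map (Coalgebra.counit : U →ₗ[k] k) LinearMap.id)
      ((TensorProduct.rid k A).toLinearMap ∘ₗ
        TensorProduct.map LinearMap.id (Coalgebra.counit : A →ₗ[k] k))
    ∘ₗ (TensorProduct.tensorTensorTensorComm k U A U A).toLinearMap


variable {k C : Type u} [Field k] [AddCommGroup C] [Module k C] [Coalgebra k C]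

/-- an arbitrary representation of `comul c`. -/
noncomputable def reprArb (k : Type u) {C : Type u} [Field k] [AddCommGroup C] [Module k C]
    [Coalgebra k C] (c : C) : CoalgebraReprOld k c where
  index := (Coalgebra.Repr.arbitrary k c).index
  left := (Coalgebra.Repr.arbitrary k c).left
  right := (Coalgebra.Repr.arbitrary k c).right
  eq := (Coalgebra.Repr.arbitrary k c).eq


lemma repr_smul_right {c : C} (r : CoalgebraReprOld k c) {T : Type u} [AddCommGroup T] [Module k T]
    (g : C →ₗ[k] T) : ∑ i ∈ r.index, counit (R := k) (r.left i) • g (r.right i) = g c := by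
  have h := congrArg (TensorProduct.lid k C) (sum_counit_tmul_eq (Coalgebra.Repr.mk (R := k) r.index r.left r.right r.eq))
  simp only [map_sum, lid_tmul] at h
  rw [one_smul] at h
  rw [← congrArg g h]; simp [map_sum]

lemma repr_smul_left {c : C} (r : CoalgebraReprOld k c) {T : Type u} [AddCommGroup T] [Module k T]
    (g : C →ₗ[k] T) : ∑ i ∈ r.index, counit (R := k) (r.right i) • g (r.left i) = g c := by
  have h := congrArg (TensorProduct.rid k C) (sum_tmul_counit_eq (Coalgebra.Repr.mk (R := k) r.index r.left r.right r.eq))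
  simp only [map_sum, rid_tmul] at h
  rw [one_smul] at h
  rw [← congrArg g h]; simp [map_sum]

lemma repr_counit_mul {c : C} (r : CoalgebraReprOld k c) :
    ∑ i ∈ r.index, counit (R := k) (r.left i) * counit (R := k) (r.right i) = counit (R := k) c := by
  simpa [smul_eq_mul] using repr_smul_right r (counit (R := k) (A := C))

lemma repr_mul_right' {c : C} (r : CoalgebraReprOld k c) (g : C →ₗ[k] k) :
    ∑ i ∈ r.index, counit (R := k) (r.left i) * g (r.right i) = g c := by
  simpa [smul_eq_mul] using repr_smul_right r g

lemma repr_mul_left' {c : C} (r : CoalgebraReprOld k c) (g : C →ₗ[k] k) :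
    ∑ i ∈ r.index, g (r.left i) * counit (R := k) (r.right i) = g c := by
  have h := repr_smul_left r g
  simp only [smul_eq_mul] at h
  rw [← h]
  exact Finset.sum_congr rfl fun i _ => mul_comm _ _


universe w v in
lemma sum_liftIndex {ι : Type v} (s : Finset ι) {M : Type u} [AddCommMonoid M] (f : ι → M) :
    ∑ i ∈ (Finset.univ : Finset (ULift.{w} (Fin s.card))), f (s.equivFin.symm i.down)
      = ∑ i ∈ s, f i := by
  rw [← Finset.sum_coe_sort s f]
  exact Fintype.sum_equiv (Equiv.ulift.trans s.equivFin.symm) _ _ (fun i => rfl)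

universe w in
/-- reindex a representation through `ULift (Fin n)` to move it into any universe. -/
@[simps]
noncomputable def liftRepr {c : C} (r : CoalgebraReprOld k c) : CoalgebraReprOld k c where
  ι := ULift.{w} (Fin r.index.card)
  index := Finset.univ
  left i := r.left (r.index.equivFin.symm i.down)
  right i := r.right (r.index.equivFin.symm i.down)
  eq := by
    rw [← r.eq]
    exact sum_liftIndex r.index (fun i => r.left i ⊗ₜ[k] r.right i)

lemma liftRepr_sum {c : C} (r : CoalgebraReprOld k c) (G : C → C → k) :
    ∑ i ∈ (liftRepr r).index, G ((liftRepr r).left i) ((liftRepr r).right i)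
      = ∑ i ∈ r.index, G (r.left i) (r.right i) := by
  simp only [liftRepr_index, liftRepr_left, liftRepr_right]
  exact sum_liftIndex r.index (fun i => G (r.left i) (r.right i))

lemma counit_comul (c : C) :
    counit (R := k) (comul (R := k) c : C ⊗[k] C) = counit (R := k) c := by
  obtain r := reprArb k c
  rw [← r.eq]
  simp only [TensorProduct.counit_def, LinearMap.coe_comp, Function.comp_apply,
    map_sum, TensorProduct.map_tmul, LinearMap.mul'_apply, AlgebraTensorModule.map_tmul,
    AlgebraTensorModule.rid_tmul, LinearEquiv.coe_coe]
  simpa only [smul_eq_mul, mul_comm] using repr_counit_mul r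

variable {U A : Type u} [Ring U] [Ring A] [Bialgebra k U] [Bialgebra k A]

/-- the coalgebra map `(u ⊗ a) ⊗ (u' ⊗ a') ↦ ε(u) ε(a') (u' ⊗ a)` underlying `twistForm`. -/
noncomputable def phi : (U ⊗[k] A) ⊗[k] (U ⊗[k] A) →ₗ[k] U ⊗[k] A :=
  TensorProduct.map
      ((TensorProduct.lid k U).toLinearMap ∘ₗ
        TensorProduct.map (Coalgebra.counit : U →ₗ[k] k) LinearMap.id)
      ((TensorProduct.rid k A).toLinearMap ∘ₗ
        TensorProduct.map LinearMap.id (Coalgebra.counit : A →ₗ[k] k))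
    ∘ₗ (TensorProduct.tensorTensorTensorComm k U A U A).toLinearMap

lemma phi_tmul (u u' : U) (a a' : A) :
    phi ((u ⊗ₜ a) ⊗ₜ (u' ⊗ₜ a') : (U ⊗[k] A) ⊗[k] (U ⊗[k] A))
      = (counit (R := k) u * counit (R := k) a') • (u' ⊗ₜ a) := by
  simp only [phi, LinearMap.coe_comp, LinearEquiv.coe_coe, Function.comp_apply,
    tensorTensorTensorComm_tmul, TensorProduct.map_tmul, LinearMap.id_coe, id_eq, lid_tmul,
    rid_tmul, smul_tmul', tmul_smul, mul_smul]
  rw [smul_comm]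

lemma tmul4 {V W X Y : Type u} [AddCommGroup V] [AddCommGroup W] [AddCommGroup X]
    [AddCommGroup Y] [Module k V] [Module k W] [Module k X] [Module k Y]
    (c₁ c₂ d₁ d₂ : k) (w : V) (x : W) (y : X) (z : Y) :
    (((c₁ * d₁) • w) ⊗ₜ[k] x) ⊗ₜ[k] (((c₂ * d₂) • y) ⊗ₜ[k] z)
      = ((c₁ * c₂) * (d₁ * d₂)) • ((w ⊗ₜ[k] x) ⊗ₜ[k] (y ⊗ₜ[k] z)) := by
  simp only [← smul_tmul', tmul_smul, smul_smul]
  congr 1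
  ring

lemma comul_phi_tmul (u u' : U) (a a' : A) :
    comul (R := k) (phi ((u ⊗ₜ a) ⊗ₜ (u' ⊗ₜ a') : (U ⊗[k] A) ⊗[k] (U ⊗[k] A)))
      = TensorProduct.map phi phi
          (comul (R := k) ((u ⊗ₜ a) ⊗ₜ (u' ⊗ₜ a'))) := by
  obtain ru := reprArb k u
  obtain ra := reprArb k a
  obtain ru' := reprArb k u'
  obtain ra' := reprArb k a'
  rw [phi_tmul, map_smul]
  simp only [TensorProduct.comul_def, LinearMap.coe_comp, Function.comp_apply,
    TensorProduct.map_tmul, AlgebraTensorModule.map_tmul, LinearEquiv.coe_coe,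
    AlgebraTensorModule.tensorTensorTensorComm_tmul]
  rw [← ru.eq, ← ra.eq, ← ru'.eq, ← ra'.eq]
  simp only [sum_tmul, tmul_sum, map_sum, Finset.smul_sum, tensorTensorTensorComm_tmul,
    TensorProduct.map_tmul, phi_tmul, smul_tmul', tmul_smul, smul_smul]
  simp only [LinearEquiv.coe_coe, TensorProduct.tensorTensorTensorComm_tmul,
    AlgebraTensorModule.tensorTensorTensorComm_tmul, TensorProduct.map_tmul, phi_tmul, smul_tmul', tmul_smul, smul_smul]
  simp only [tmul4]
  simp only [← smul_tmul']
  conv_rhs => rw [Finset.sum_comm]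
  rw [Finset.sum_comm]
  refine Finset.sum_congr rfl fun p _ => ?_
  rw [Finset.sum_comm]
  refine Finset.sum_congr rfl fun j _ => ?_
  simp only [← Finset.sum_smul]
  congr 1
  rw [← repr_counit_mul ru, ← repr_counit_mul ra', Finset.sum_mul_sum]
  rw [Finset.sum_comm]

lemma comul_comp_phi :
    (comul (R := k) (A := U ⊗[k] A)) ∘ₗ (phi (k := k) (U := U) (A := A))
      = TensorProduct.map phi phi ∘ₗ comul := by
  ext u a u' a'
  exact comul_phi_tmul u u' a a'

lemma counit_comp_phi :
    (counit (R := k) (A := U ⊗[k] A)) ∘ₗ (phi (k := k) (U := U) (A := A))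
      = (counit (R := k) (A := (U ⊗[k] A) ⊗[k] (U ⊗[k] A))) := by
  ext u a u' a'
  simp [phi_tmul, TensorProduct.counit_def, mul_comm, mul_left_comm]

lemma twistForm_eq (τ : U ⊗[k] A →ₗ[k] k) : twistForm τ = τ ∘ₗ phi := rfl

lemma conv_comp_phi (f g : U ⊗[k] A →ₗ[k] k) :
    convolution (f ∘ₗ phi) (g ∘ₗ phi) = (convolution f g) ∘ₗ phi := by
  unfold convolution
  rw [TensorProduct.map_comp]
  calc LinearMap.mul' k k ∘ₗ (TensorProduct.map f g ∘ₗ TensorProduct.map phi phi) ∘ₗ comul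
      = LinearMap.mul' k k ∘ₗ TensorProduct.map f g ∘ₗ (TensorProduct.map phi phi ∘ₗ comul) := by
        simp only [LinearMap.comp_assoc]
    _ = LinearMap.mul' k k ∘ₗ TensorProduct.map f g ∘ₗ (comul ∘ₗ phi) := by
        rw [← comul_comp_phi]
    _ = (LinearMap.mul' k k ∘ₗ TensorProduct.map f g ∘ₗ comul) ∘ₗ phi := by
        simp only [LinearMap.comp_assoc]

lemma twistForm_tmul (τ : U ⊗[k] A →ₗ[k] k) (u u' : U) (a a' : A) :
    twistForm τ ((u ⊗ₜ a) ⊗ₜ (u' ⊗ₜ a'))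
      = counit (R := k) u * τ (u' ⊗ₜ a) * counit (R := k) a' := by
  rw [twistForm_eq]
  simp only [LinearMap.coe_comp, Function.comp_apply, phi_tmul, map_smul, smul_eq_mul]
  ring

noncomputable def Mmap (τ : U ⊗[k] A →ₗ[k] k) :
    (((U ⊗[k] A) ⊗[k] (U ⊗[k] A)) ⊗[k] ((U ⊗[k] A) ⊗[k] (U ⊗[k] A))) ⊗[k] (U ⊗[k] A) →ₗ[k] k :=
  LinearMap.mul' k k
    ∘ₗ TensorProduct.map (twistForm τ)
        ((twistForm τ) ∘ₗ TensorProduct.map (LinearMap.mul' k (U ⊗[k] A)) LinearMap.id)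
    ∘ₗ (TensorProduct.assoc k _ _ _).toLinearMap
    ∘ₗ TensorProduct.map
        (TensorProduct.tensorTensorTensorComm k (U ⊗[k] A) (U ⊗[k] A) (U ⊗[k] A)
          (U ⊗[k] A)).toLinearMap LinearMap.id

lemma Mmap_tmul (τ : U ⊗[k] A →ₗ[k] k) (lx rx ly ry z : U ⊗[k] A) :
    Mmap τ (((lx ⊗ₜ rx) ⊗ₜ (ly ⊗ₜ ry)) ⊗ₜ z)
      = twistForm τ (lx ⊗ₜ ly) * twistForm τ ((rx * ry) ⊗ₜ z) := by
  simp [Mmap]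

noncomputable def M'map (τ : U ⊗[k] A →ₗ[k] k) :
    (U ⊗[k] A) ⊗[k] (((U ⊗[k] A) ⊗[k] (U ⊗[k] A)) ⊗[k] ((U ⊗[k] A) ⊗[k] (U ⊗[k] A))) →ₗ[k] k :=
  LinearMap.mul' k k
    ∘ₗ TensorProduct.map (twistForm τ) (twistForm τ)
    ∘ₗ (TensorProduct.leftComm k (U ⊗[k] A) ((U ⊗[k] A) ⊗[k] (U ⊗[k] A)) (U ⊗[k] A)).toLinearMap
    ∘ₗ TensorProduct.map LinearMap.id
        (TensorProduct.map LinearMap.id (LinearMap.mul' k (U ⊗[k] A)))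
    ∘ₗ TensorProduct.map LinearMap.id
        (TensorProduct.tensorTensorTensorComm k (U ⊗[k] A) (U ⊗[k] A) (U ⊗[k] A)
          (U ⊗[k] A)).toLinearMap

lemma M'map_tmul (τ : U ⊗[k] A →ₗ[k] k) (x ly ry lz rz : U ⊗[k] A) :
    M'map τ (x ⊗ₜ ((ly ⊗ₜ ry) ⊗ₜ (lz ⊗ₜ rz)))
      = twistForm τ (ly ⊗ₜ lz) * twistForm τ (x ⊗ₜ (ry * rz)) := by
  simp [M'map, TensorProduct.leftComm]

lemma Mmap_sum (τ : U ⊗[k] A →ₗ[k] k) {x y : U ⊗[k] A} (z : U ⊗[k] A)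
    (rx : CoalgebraReprOld k x) (ry : CoalgebraReprOld k y) :
    ∑ i ∈ rx.index, ∑ j ∈ ry.index,
        twistForm τ (rx.left i ⊗ₜ ry.left j) *
          twistForm τ ((rx.right i * ry.right j) ⊗ₜ z)
      = Mmap τ ((comul (R := k) x ⊗ₜ comul (R := k) y) ⊗ₜ z) := by
  rw [← rx.eq, ← ry.eq]
  simp [sum_tmul, tmul_sum, map_sum, Mmap_tmul]
  exact Finset.sum_comm

lemma M'map_sum (τ : U ⊗[k] A →ₗ[k] k) {y z : U ⊗[k] A} (x : U ⊗[k] A)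
    (ry : CoalgebraReprOld k y) (rz : CoalgebraReprOld k z) :
    ∑ j ∈ ry.index, ∑ l ∈ rz.index,
        twistForm τ (ry.left j ⊗ₜ rz.left l) *
          twistForm τ (x ⊗ₜ (ry.right j * rz.right l))
      = M'map τ (x ⊗ₜ (comul (R := k) y ⊗ₜ comul (R := k) z)) := by
  rw [← ry.eq, ← rz.eq]
  simp [sum_tmul, tmul_sum, map_sum, M'map_tmul]
  exact Finset.sum_comm

lemma cocycle_core (τ : U ⊗[k] A →ₗ[k] k)
    (hA1 : ∀ (u : U) (a a' : A) (r : CoalgebraReprOld k u),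
      τ (u ⊗ₜ (a * a')) = ∑ i ∈ r.index, τ (r.right i ⊗ₜ a) * τ (r.left i ⊗ₜ a'))
    (hA3 : ∀ (u u' : U) (a : A) (r : CoalgebraReprOld k a),
      τ ((u * u') ⊗ₜ a) = ∑ i ∈ r.index, τ (u ⊗ₜ r.left i) * τ (u' ⊗ₜ r.right i))
    (u u' u'' : U) (a a' a'' : A) :
    Mmap τ ((comul (R := k) (u ⊗ₜ a) ⊗ₜ comul (R := k) (u' ⊗ₜ a')) ⊗ₜ (u'' ⊗ₜ a''))
      = M'map τ ((u ⊗ₜ a) ⊗ₜ (comul (R := k) (u' ⊗ₜ a') ⊗ₜ comul (R := k) (u'' ⊗ₜ a''))) := by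
  obtain ru := reprArb k u
  obtain ra := reprArb k a
  obtain ru' := reprArb k u'
  obtain ra' := reprArb k a'
  obtain ru'' := reprArb k u''
  obtain ra'' := reprArb k a''
  simp only [TensorProduct.comul_def, LinearMap.coe_comp, Function.comp_apply,
    TensorProduct.map_tmul, AlgebraTensorModule.map_tmul, LinearEquiv.coe_coe,
    AlgebraTensorModule.tensorTensorTensorComm_tmul]
  rw [← ru.eq, ← ra.eq, ← ru'.eq, ← ra'.eq, ← ru''.eq, ← ra''.eq]
  simp only [sum_tmul, tmul_sum, map_sum, LinearEquiv.coe_coe,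
    TensorProduct.tensorTensorTensorComm_tmul, Mmap_tmul, M'map_tmul,
    AlgebraTensorModule.tensorTensorTensorComm_tmul,
    Algebra.TensorProduct.tmul_mul_tmul, twistForm_tmul, Bialgebra.counit_mul]
  -- left side: contract the `ru` index
  trans (∑ q ∈ ra'.index, ∑ p ∈ ru'.index, ∑ j ∈ ra.index,
    Coalgebra.counit (R := k) u * (τ (ru'.left p ⊗ₜ ra.left j) *
      Coalgebra.counit (R := k) (ra'.left q) * Coalgebra.counit (R := k) (ru'.right p) *
      (τ (u'' ⊗ₜ (ra.right j * ra'.right q)) * Coalgebra.counit (R := k) a'')))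
  · refine Finset.sum_congr rfl fun q _ => Finset.sum_congr rfl fun p _ =>
      Finset.sum_congr rfl fun j _ => ?_
    rw [← repr_counit_mul ru, Finset.sum_mul]
    exact Finset.sum_congr rfl fun i _ => by ring
  -- contract the `ru'` index
  trans (∑ q ∈ ra'.index, ∑ j ∈ ra.index,
    Coalgebra.counit (R := k) u * (τ (u' ⊗ₜ ra.left j) *
      Coalgebra.counit (R := k) (ra'.left q) *
      (τ (u'' ⊗ₜ (ra.right j * ra'.right q)) * Coalgebra.counit (R := k) a'')))
  · refine Finset.sum_congr rfl fun q _ => ?_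
    rw [Finset.sum_comm]
    refine Finset.sum_congr rfl fun j _ => ?_
    have h : ∑ p ∈ ru'.index, τ (ru'.left p ⊗ₜ ra.left j) *
        Coalgebra.counit (R := k) (ru'.right p) = τ (u' ⊗ₜ ra.left j) := by
      simpa using repr_mul_left' ru' (τ ∘ₗ (TensorProduct.mk k U A).flip (ra.left j))
    rw [← h]
    simp only [Finset.sum_mul, Finset.mul_sum]
    exact Finset.sum_congr rfl fun p _ => by ring
  -- contract the `ra'` index
  trans (∑ j ∈ ra.index,
    Coalgebra.counit (R := k) u * (τ (u' ⊗ₜ ra.left j) *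
      (τ (u'' ⊗ₜ (ra.right j * a')) * Coalgebra.counit (R := k) a'')))
  · rw [Finset.sum_comm]
    refine Finset.sum_congr rfl fun j _ => ?_
    have h : ∑ q ∈ ra'.index, Coalgebra.counit (R := k) (ra'.left q) *
        τ (u'' ⊗ₜ (ra.right j * ra'.right q)) = τ (u'' ⊗ₜ (ra.right j * a')) := by
      simpa using repr_mul_right' ra'
        (τ ∘ₗ TensorProduct.mk k U A u'' ∘ₗ LinearMap.mulLeft k (ra.right j))
    rw [← h]
    simp only [Finset.sum_mul, Finset.mul_sum]
    exact Finset.sum_congr rfl fun q _ => by ring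
  -- apply (A.1)
  trans (∑ j ∈ ra.index, ∑ m ∈ ru''.index,
    Coalgebra.counit (R := k) u * (τ (u' ⊗ₜ ra.left j) *
      ((τ (ru''.right m ⊗ₜ ra.right j) * τ (ru''.left m ⊗ₜ a')) * Coalgebra.counit (R := k) a'')))
  · refine Finset.sum_congr rfl fun j _ => ?_
    rw [hA1 u'' (ra.right j) a' (liftRepr ru''),
      liftRepr_sum ru'' (fun x y => τ (y ⊗ₜ ra.right j) * τ (x ⊗ₜ a'))]
    simp only [Finset.sum_mul, Finset.mul_sum]
    try exact Finset.sum_congr rfl fun m _ => by ring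
  -- now work on the right side
  symm
  -- contract the `ra''` index
  trans (∑ n ∈ ra''.index,
    (Coalgebra.counit (R := k) (ra''.left n) * Coalgebra.counit (R := k) (ra''.right n)) *
    ∑ m ∈ ru''.index, ∑ q ∈ ra'.index, ∑ p ∈ ru'.index,
      Coalgebra.counit (R := k) (ru'.left p) * τ (ru''.left m ⊗ₜ ra'.left q) *
        (Coalgebra.counit (R := k) u * τ ((ru'.right p * ru''.right m) ⊗ₜ a) *
          Coalgebra.counit (R := k) (ra'.right q)))
  · refine Finset.sum_congr rfl fun n _ => ?_
    simp only [Finset.mul_sum]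
    exact Finset.sum_congr rfl fun m _ => Finset.sum_congr rfl fun q _ =>
      Finset.sum_congr rfl fun p _ => by ring
  rw [← Finset.sum_mul, repr_counit_mul]
  -- contract the `ru'` index
  trans (Coalgebra.counit (R := k) a'' *
    ∑ m ∈ ru''.index, ∑ q ∈ ra'.index,
      τ (ru''.left m ⊗ₜ ra'.left q) *
        (Coalgebra.counit (R := k) u * τ ((u' * ru''.right m) ⊗ₜ a) *
          Coalgebra.counit (R := k) (ra'.right q)))
  · congr 1
    refine Finset.sum_congr rfl fun m _ => Finset.sum_congr rfl fun q _ => ?_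
    have h : ∑ p ∈ ru'.index, Coalgebra.counit (R := k) (ru'.left p) *
        τ ((ru'.right p * ru''.right m) ⊗ₜ a) = τ ((u' * ru''.right m) ⊗ₜ a) := by
      simpa using repr_mul_right' ru'
        (τ ∘ₗ (TensorProduct.mk k U A).flip a ∘ₗ LinearMap.mulRight k (ru''.right m))
    rw [← h]
    simp only [Finset.sum_mul, Finset.mul_sum]
    exact Finset.sum_congr rfl fun p _ => by ring
  -- contract the `ra'` index
  trans (Coalgebra.counit (R := k) a'' *
    ∑ m ∈ ru''.index,
      τ (ru''.left m ⊗ₜ a') * (Coalgebra.counit (R := k) u * τ ((u' * ru''.right m) ⊗ₜ a)))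
  · congr 1
    refine Finset.sum_congr rfl fun m _ => ?_
    have h : ∑ q ∈ ra'.index, τ (ru''.left m ⊗ₜ ra'.left q) *
        Coalgebra.counit (R := k) (ra'.right q) = τ (ru''.left m ⊗ₜ a') := by
      simpa using repr_mul_left' ra' (τ ∘ₗ TensorProduct.mk k U A (ru''.left m))
    rw [← h]
    simp only [Finset.sum_mul, Finset.mul_sum]
    exact Finset.sum_congr rfl fun q _ => by ring
  -- apply (A.3)
  trans (Coalgebra.counit (R := k) a'' *
    ∑ m ∈ ru''.index, ∑ j ∈ ra.index,
      τ (ru''.left m ⊗ₜ a') *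
        (Coalgebra.counit (R := k) u * (τ (u' ⊗ₜ ra.left j) * τ (ru''.right m ⊗ₜ ra.right j))))
  · congr 1
    refine Finset.sum_congr rfl fun m _ => ?_
    rw [hA3 u' (ru''.right m) a (liftRepr ra),
      liftRepr_sum ra (fun x y => τ (u' ⊗ₜ x) * τ (ru''.right m ⊗ₜ y))]
    simp only [Finset.sum_mul, Finset.mul_sum]
    try exact Finset.sum_congr rfl fun j _ => by ring
  -- match up
  simp only [Finset.mul_sum]
  rw [Finset.sum_comm]
  exact Finset.sum_congr rfl fun j _ => Finset.sum_congr rfl fun m _ => by ring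

lemma Mmap_eq_M'map (τ : U ⊗[k] A →ₗ[k] k)
    (hA1 : ∀ (u : U) (a a' : A) (r : CoalgebraReprOld k u),
      τ (u ⊗ₜ (a * a')) = ∑ i ∈ r.index, τ (r.right i ⊗ₜ a) * τ (r.left i ⊗ₜ a'))
    (hA3 : ∀ (u u' : U) (a : A) (r : CoalgebraReprOld k a),
      τ ((u * u') ⊗ₜ a) = ∑ i ∈ r.index, τ (u ⊗ₜ r.left i) * τ (u' ⊗ₜ r.right i))
    (x y z : U ⊗[k] A) :
    Mmap τ ((comul (R := k) x ⊗ₜ comul (R := k) y) ⊗ₜ z)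
      = M'map τ (x ⊗ₜ (comul (R := k) y ⊗ₜ comul (R := k) z)) := by
  induction x using TensorProduct.induction_on with
  | zero => simp only [map_zero, zero_tmul, tmul_zero]
  | tmul u a =>
    induction y using TensorProduct.induction_on with
    | zero => simp only [map_zero, zero_tmul, tmul_zero]
    | tmul u' a' =>
      induction z using TensorProduct.induction_on with
      | zero => simp only [map_zero, zero_tmul, tmul_zero]
      | tmul u'' a'' => exact cocycle_core τ hA1 hA3 u u' u'' a a' a''
      | add z₁ z₂ h1 h2 => simp only [map_add, tmul_add, add_tmul, h1, h2]
    | add y₁ y₂ h1 h2 => simp only [map_add, tmul_add, add_tmul, h1, h2]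
  | add x₁ x₂ h1 h2 => simp only [map_add, tmul_add, add_tmul, h1, h2]

theorem stmt_3 {k U A : Type u} [Field k] [Ring U] [Ring A]
    [Bialgebra k U] [Bialgebra k A]
    (τ τinv : U ⊗[k] A →ₗ[k] k)
    -- (A.1)–(A.4)
    (hA1 : ∀ (u : U) (a a' : A) (r : CoalgebraReprOld k u),
      τ (u ⊗ₜ (a * a')) = ∑ i ∈ r.index, τ (r.right i ⊗ₜ a) * τ (r.left i ⊗ₜ a'))
    (hA2 : ∀ a : A, τ (1 ⊗ₜ a) = Coalgebra.counit a)
    (hA3 : ∀ (u u' : U) (a : A) (r : CoalgebraReprOld k a),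
      τ ((u * u') ⊗ₜ a) = ∑ i ∈ r.index, τ (u ⊗ₜ r.left i) * τ (u' ⊗ₜ r.right i))
    (hA4 : ∀ u : U, τ (u ⊗ₜ (1 : A)) = Coalgebra.counit u)
    -- `τ` is convolution invertible
    (hinv₁ : convolution τ τinv = (Coalgebra.counit : U ⊗[k] A →ₗ[k] k))
    (hinv₂ : convolution τinv τ = (Coalgebra.counit : U ⊗[k] A →ₗ[k] k)) :
    -- `σ = twistForm τ` is a two-cocycle for the tensor product bialgebra `U ⊗ A`:
    (∃ σinv : (U ⊗[k] A) ⊗[k] (U ⊗[k] A) →ₗ[k] k,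
      convolution (twistForm τ) σinv
          = (Coalgebra.counit : (U ⊗[k] A) ⊗[k] (U ⊗[k] A) →ₗ[k] k) ∧
      convolution σinv (twistForm τ)
          = (Coalgebra.counit : (U ⊗[k] A) ⊗[k] (U ⊗[k] A) →ₗ[k] k)) ∧
    (∀ (x y z : U ⊗[k] A) (rx : CoalgebraReprOld k x) (ry : CoalgebraReprOld k y)
        (rz : CoalgebraReprOld k z),
      ∑ i ∈ rx.index, ∑ j ∈ ry.index,
        twistForm τ (rx.left i ⊗ₜ ry.left j) *
          twistForm τ ((rx.right i * ry.right j) ⊗ₜ z)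
      = ∑ j ∈ ry.index, ∑ l ∈ rz.index,
        twistForm τ (ry.left j ⊗ₜ rz.left l) *
          twistForm τ (x ⊗ₜ (ry.right j * rz.right l))) := by
  refine ⟨⟨twistForm τinv, ?_, ?_⟩, ?_⟩
  · rw [twistForm_eq, twistForm_eq, conv_comp_phi, hinv₁, counit_comp_phi]
  · rw [twistForm_eq, twistForm_eq, conv_comp_phi, hinv₂, counit_comp_phi]
  · intro x y z rx ry rz
    rw [Mmap_sum τ z rx ry, M'map_sum τ x ry rz]
    exact Mmap_eq_M'map τ hA1 hA3 x y z
end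

section
/- Let H be a Hopf algebra over k and let (C, Δ, ε) be a coalgebra in the category ᴴᴴYD. Then the set C^r of all functionals c* ∈ C* that vanish on I·C for some cofinite ideal I of H is a subalgebra of the dual algebra C*; that is, ε ∈ C^r and if a, b ∈ C^r then the convolution product ab (defined by (ab)(c) = a(c⁽¹⁾)b(c⁽²⁾)) lies in C^r. -/
/- STATEMENT 10: Let `H` be a Hopf algebra over `k` and `(C, Δ, ε)` a coalgebra in the
category of Yetter–Drinfel'd modules over `H` (so `C` is a left `H`-module, `Δ` is
`H`-linear and `ε(h·c) = ε_H(h) ε_C(c)`).  Then the set `C^r` of functionals `p ∈ C*`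
vanishing on `I·C` for some cofinite (two-sided) ideal `I` of `H` is a subalgebra of the dual
(convolution) algebra `C*`: the counit `ε` lies in `C^r`, and `C^r` is closed under the
convolution product `(pq)(c) = p(c⁽¹⁾) q(c⁽²⁾)`. -/

open TensorProduct Coalgebra

universe u

/-- `p` vanishes on `I·C` for some cofinite two-sided ideal `I` of `H`. -/
def VanishesOnCofiniteIdeal {k H C : Type u} [Field k] [Ring H] [Algebra k H]
    [AddCommGroup C] [Module k C] (act : H ⊗[k] C →ₗ[k] C) (p : C →ₗ[k] k) : Prop :=
  ∃ I : Submodule k H,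
    (∀ x ∈ I, ∀ h : H, h * x ∈ I ∧ x * h ∈ I) ∧
    FiniteDimensional k (H ⧸ I) ∧
    (∀ x ∈ I, ∀ c : C, p (act (x ⊗ₜ c)) = 0)

/-- The "ideal tensor" submodule `I ⊗ H + H ⊗ J` is a two-sided ideal of `H ⊗ H`. -/
lemma aux_ideal_mul {k H : Type u} [Field k] [Ring H] [Algebra k H] {I J : Submodule k H}
    (hI : ∀ x ∈ I, ∀ h : H, h * x ∈ I ∧ x * h ∈ I)
    (hJ : ∀ x ∈ J, ∀ h : H, h * x ∈ J ∧ x * h ∈ J)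
    {t : H ⊗[k] H}
    (ht : t ∈ LinearMap.range (LinearMap.lTensor H J.subtype)
        ⊔ LinearMap.range (LinearMap.rTensor H I.subtype))
    (s : H ⊗[k] H) :
    s * t ∈ LinearMap.range (LinearMap.lTensor H J.subtype)
        ⊔ LinearMap.range (LinearMap.rTensor H I.subtype) ∧
    t * s ∈ LinearMap.range (LinearMap.lTensor H J.subtype)
        ⊔ LinearMap.range (LinearMap.rTensor H I.subtype) := by
  -- each range is separately a two-sided ideal
  have hL : ∀ (u : H ⊗[k] J) (s : H ⊗[k] H),
      s * LinearMap.lTensor H J.subtype u ∈ LinearMap.range (LinearMap.lTensor H J.subtype) ∧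
      LinearMap.lTensor H J.subtype u * s ∈ LinearMap.range (LinearMap.lTensor H J.subtype) := by
    intro u
    induction u using TensorProduct.induction_on with
    | zero => intro s; simp
    | tmul h y =>
      intro s
      induction s using TensorProduct.induction_on with
      | zero => simp
      | tmul a b =>
        constructor
        · exact ⟨(a * h) ⊗ₜ ⟨b * (y : H), (hJ _ y.2 b).1⟩, by
            simp [LinearMap.lTensor_tmul, Algebra.TensorProduct.tmul_mul_tmul]⟩
        · exact ⟨(h * a) ⊗ₜ ⟨(y : H) * b, (hJ _ y.2 b).2⟩, by
            simp [LinearMap.lTensor_tmul, Algebra.TensorProduct.tmul_mul_tmul]⟩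
      | add s₁ s₂ ih₁ ih₂ =>
        refine ⟨?_, ?_⟩
        · rw [add_mul]; exact Submodule.add_mem _ ih₁.1 ih₂.1
        · rw [mul_add]; exact Submodule.add_mem _ ih₁.2 ih₂.2
    | add u₁ u₂ ih₁ ih₂ =>
      intro s
      rw [map_add]
      refine ⟨?_, ?_⟩
      · rw [mul_add]; exact Submodule.add_mem _ (ih₁ s).1 (ih₂ s).1
      · rw [add_mul]; exact Submodule.add_mem _ (ih₁ s).2 (ih₂ s).2
  have hR : ∀ (u : I ⊗[k] H) (s : H ⊗[k] H),
      s * LinearMap.rTensor H I.subtype u ∈ LinearMap.range (LinearMap.rTensor H I.subtype) ∧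
      LinearMap.rTensor H I.subtype u * s ∈ LinearMap.range (LinearMap.rTensor H I.subtype) := by
    intro u
    induction u using TensorProduct.induction_on with
    | zero => intro s; simp
    | tmul x h =>
      intro s
      induction s using TensorProduct.induction_on with
      | zero => simp
      | tmul a b =>
        constructor
        · exact ⟨(⟨a * (x : H), (hI _ x.2 a).1⟩ : I) ⊗ₜ (b * h), by
            simp [LinearMap.rTensor_tmul, Algebra.TensorProduct.tmul_mul_tmul]⟩
        · exact ⟨(⟨(x : H) * a, (hI _ x.2 a).2⟩ : I) ⊗ₜ (h * b), by
            simp [LinearMap.rTensor_tmul, Algebra.TensorProduct.tmul_mul_tmul]⟩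
      | add s₁ s₂ ih₁ ih₂ =>
        refine ⟨?_, ?_⟩
        · rw [add_mul]; exact Submodule.add_mem _ ih₁.1 ih₂.1
        · rw [mul_add]; exact Submodule.add_mem _ ih₁.2 ih₂.2
    | add u₁ u₂ ih₁ ih₂ =>
      intro s
      rw [map_add]
      refine ⟨?_, ?_⟩
      · rw [mul_add]; exact Submodule.add_mem _ (ih₁ s).1 (ih₂ s).1
      · rw [add_mul]; exact Submodule.add_mem _ (ih₁ s).2 (ih₂ s).2
  obtain ⟨t₁, ht₁, t₂, ht₂, rfl⟩ := Submodule.mem_sup.mp ht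
  obtain ⟨u₁, rfl⟩ := ht₁
  obtain ⟨u₂, rfl⟩ := ht₂
  constructor
  · rw [mul_add]
    exact Submodule.add_mem _ (Submodule.mem_sup_left (hL u₁ s).1)
      (Submodule.mem_sup_right (hR u₂ s).1)
  · rw [add_mul]
    exact Submodule.add_mem _ (Submodule.mem_sup_left (hL u₁ s).2)
      (Submodule.mem_sup_right (hR u₂ s).2)

theorem stmt_10 {k H C : Type u} [Field k] [Ring H] [HopfAlgebra k H]
    [AddCommGroup C] [Module k C]
    (act : H ⊗[k] C →ₗ[k] C)
    (Δ : C →ₗ[k] C ⊗[k] C) (ε : C →ₗ[k] k)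
    -- `C` is a left `H`-module:
    (hact1 : ∀ c : C, act ((1 : H) ⊗ₜ c) = c)
    (hact2 : ∀ (g h : H) (c : C), act ((g * h) ⊗ₜ c) = act (g ⊗ₜ act (h ⊗ₜ c)))
    -- `(C, Δ, ε)` is a coalgebra:
    (hcoassoc : TensorProduct.map Δ LinearMap.id ∘ₗ Δ
      = (TensorProduct.assoc k C C C).symm.toLinearMap ∘ₗ TensorProduct.map LinearMap.id Δ ∘ₗ Δ)
    (hcounit₁ : (TensorProduct.lid k C).toLinearMap ∘ₗ TensorProduct.map ε LinearMap.id ∘ₗ Δ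
      = LinearMap.id)
    (hcounit₂ : (TensorProduct.rid k C).toLinearMap ∘ₗ TensorProduct.map LinearMap.id ε ∘ₗ Δ
      = LinearMap.id)
    -- `Δ` is a map of left `H`-modules (`Δ(h·c) = h₁·c⁽¹⁾ ⊗ h₂·c⁽²⁾`) …
    (hΔlin : Δ ∘ₗ act
      = (TensorProduct.map act act
          ∘ₗ (TensorProduct.tensorTensorTensorComm k H H C C).toLinearMap
          ∘ₗ TensorProduct.map (Coalgebra.comul : H →ₗ[k] H ⊗[k] H) LinearMap.id)
        ∘ₗ TensorProduct.map LinearMap.id Δ)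
    -- … and `ε(h·c) = ε_H(h) ε_C(c)`:
    (hεlin : ε ∘ₗ act
      = LinearMap.mul' k k ∘ₗ TensorProduct.map (Coalgebra.counit : H →ₗ[k] k) ε) :
    -- `C^r` is a subalgebra of the dual algebra `C*`:
    VanishesOnCofiniteIdeal act ε ∧
    (∀ p q : C →ₗ[k] k, VanishesOnCofiniteIdeal act p → VanishesOnCofiniteIdeal act q →
      VanishesOnCofiniteIdeal act (LinearMap.mul' k k ∘ₗ TensorProduct.map p q ∘ₗ Δ)) := by
  constructor
  · -- counit part
    refine ⟨LinearMap.ker (Coalgebra.counit : H →ₗ[k] k), ?_, ?_, ?_⟩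
    · intro x hx h
      rw [LinearMap.mem_ker] at hx
      constructor <;> rw [LinearMap.mem_ker]
      · rw [Bialgebra.counit_mul, hx, mul_zero]
      · rw [Bialgebra.counit_mul, hx, zero_mul]
    · exact (LinearMap.quotKerEquivRange (Coalgebra.counit : H →ₗ[k] k)).symm.finiteDimensional
    · intro x hx c
      have h := LinearMap.congr_fun hεlin (x ⊗ₜ c)
      simp only [LinearMap.comp_apply, TensorProduct.map_tmul, LinearMap.mul'_apply] at h
      rw [h, LinearMap.mem_ker.mp hx, zero_mul]
  · rintro p q ⟨I, hIid, hIfin, hIp⟩ ⟨J, hJid, hJfin, hJq⟩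
    haveI := hIfin
    haveI := hJfin
    set φ : H →ₗ[k] (H ⧸ I) ⊗[k] (H ⧸ J) :=
      TensorProduct.map I.mkQ J.mkQ ∘ₗ (Coalgebra.comul : H →ₗ[k] H ⊗[k] H) with hφ
    have hker : LinearMap.ker (TensorProduct.map I.mkQ J.mkQ)
        = LinearMap.range (LinearMap.lTensor H J.subtype)
          ⊔ LinearMap.range (LinearMap.rTensor H I.subtype) :=
      TensorProduct.map_ker (LinearMap.exact_subtype_mkQ I) (Submodule.mkQ_surjective I)
        (LinearMap.exact_subtype_mkQ J) (Submodule.mkQ_surjective J)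
    -- the curried evaluation map
    set L : H ⊗[k] H →ₗ[k] (C ⊗[k] C) →ₗ[k] k :=
      TensorProduct.curry (LinearMap.mul' k k ∘ₗ TensorProduct.map p q
        ∘ₗ TensorProduct.map act act
        ∘ₗ (TensorProduct.tensorTensorTensorComm k H H C C).toLinearMap) with hL
    have hSL : LinearMap.range (LinearMap.lTensor H J.subtype)
          ⊔ LinearMap.range (LinearMap.rTensor H I.subtype) ≤ LinearMap.ker L := by
      apply sup_le <;> rw [LinearMap.range_le_ker_iff]
      · apply TensorProduct.ext'
        intro h y
        apply TensorProduct.ext'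
        intro c c'
        simp only [hL, LinearMap.comp_apply, LinearMap.lTensor_tmul,
          TensorProduct.curry_apply, TensorProduct.tensorTensorTensorComm_tmul,
          TensorProduct.map_tmul, LinearMap.mul'_apply, LinearMap.zero_apply,
          LinearEquiv.coe_coe, Submodule.coe_subtype]
        rw [hJq _ y.2, mul_zero]
      · apply TensorProduct.ext'
        intro x h
        apply TensorProduct.ext'
        intro c c'
        simp only [hL, LinearMap.comp_apply, LinearMap.rTensor_tmul,
          TensorProduct.curry_apply, TensorProduct.tensorTensorTensorComm_tmul,
          TensorProduct.map_tmul, LinearMap.mul'_apply, LinearMap.zero_apply,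
          LinearEquiv.coe_coe, Submodule.coe_subtype]
        rw [hIp _ x.2, zero_mul]
    refine ⟨LinearMap.ker φ, ?_, ?_, ?_⟩
    · intro x hx h
      rw [LinearMap.mem_ker, hφ, LinearMap.comp_apply] at hx
      have hxS : (Coalgebra.comul x : H ⊗[k] H) ∈ _ := hker ▸ LinearMap.mem_ker.mpr hx
      have hmul := aux_ideal_mul hIid hJid hxS (Coalgebra.comul h)
      constructor <;> rw [LinearMap.mem_ker, hφ, LinearMap.comp_apply, Bialgebra.comul_mul,
        ← LinearMap.mem_ker, hker]
      · exact hmul.1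
      · exact hmul.2
    · haveI : FiniteDimensional k ((H ⧸ I) ⊗[k] (H ⧸ J)) := Module.Finite.tensorProduct k _ _
      exact Module.Finite.equiv (LinearMap.quotKerEquivRange φ).symm
    · intro x hx c
      rw [LinearMap.mem_ker, hφ, LinearMap.comp_apply] at hx
      have hxS := hker ▸ LinearMap.mem_ker.mpr hx
      have hΔ := LinearMap.congr_fun hΔlin (x ⊗ₜ c)
      simp only [LinearMap.comp_apply, TensorProduct.map_tmul, LinearMap.id_apply] at hΔ
      rw [LinearMap.comp_apply, LinearMap.comp_apply, hΔ]
      have hL0 : L (Coalgebra.comul x) = 0 := hSL hxS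
      calc LinearMap.mul' k k (TensorProduct.map p q
            ((TensorProduct.map act act)
              ((TensorProduct.tensorTensorTensorComm k H H C C)
                (Coalgebra.comul x ⊗ₜ Δ c))))
          = L (Coalgebra.comul x) (Δ c) := by simp [hL]
        _ = 0 := by rw [hL0]; rfl
end
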